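/- Let g be 1-periodic, bounded, with ∫₀¹ g = 0, and let φ ∈ C¹([0,L]) where L is not necessarily an integer multiple of l. Writing N = ⌊L/l⌋, the contribution of the partial cell is ∫_{Nl}^L φ(x)(1/l)g(x/l) dx = φ(L) σ_l + o(1), where σ_l := ∫_0^{(L−Nl)/l} g(y) dy is bounded, and any limit point σ of σ_l gives the surface charge at x = L: lim over a subsequence of ∫₀^L φ (1/l) g(x/l) dx = p₀ ∫₀^L φ' dx + φ(L)σ. -/

import Mathlib

open MeasureTheory Filter Topology Real

private lemma bdd_intInt {h : ℝ → ℝ} {C : ℝ}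
    (hm : Measurable h) (hb : ∀ x, |h x| ≤ C) (a b : ℝ) :
    IntervalIntegrable h volume a b := by
  constructor <;>
    exact Measure.integrableOn_of_bounded measure_Ioc_lt_top.ne
      hm.aestronglyMeasurable (ae_of_all _ fun x => hb x)
private lemma parts_aux {h ψ φ : ℝ → ℝ} {a b C : ℝ} (hab : a ≤ b)
    (hhm : Measurable h) (hhb : ∀ x, |h x| ≤ C)
    (hψ : Continuous ψ)
    (hrep : ∀ x, φ x = φ a + ∫ t in a..x, ψ t) :
    ∫ x in a..b, φ x * h x
      = φ b * (∫ x in a..b, h x) - ∫ x in a..b, ψ x * (∫ t in a..x, h t) := by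
  have hC0 : 0 ≤ C := le_trans (abs_nonneg _) (hhb a)
  have hInt : ∀ u v : ℝ, IntervalIntegrable h volume u v := bdd_intInt hhm hhb
  obtain ⟨Cψ, hCψ⟩ : ∃ Cψ, ∀ x ∈ Set.Icc a b, ‖ψ x‖ ≤ Cψ :=
    isCompact_Icc.exists_bound_of_continuousOn hψ.continuousOn
  have hCψ0 : 0 ≤ Cψ := le_trans (norm_nonneg _) (hCψ a ⟨le_rfl, hab⟩)
  set P : ℝ → ℝ := fun x => ∫ t in a..x, ψ t with hP
  set Hh : ℝ → ℝ := fun x => ∫ t in a..x, h t with hHh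
  have hPc : Continuous P :=
    intervalIntegral.continuous_primitive (fun u v => hψ.intervalIntegrable u v) a
  have hHc : Continuous Hh := intervalIntegral.continuous_primitive hInt a
  -- the kernel
  set k : ℝ × ℝ → ℝ := fun p => if p.2 ≤ p.1 then ψ p.2 * h p.1 else 0 with hk
  have hkm : Measurable k := by
    exact Measurable.ite (measurableSet_le measurable_snd measurable_fst)
      ((hψ.measurable.comp measurable_snd).mul (hhm.comp measurable_fst)) measurable_const
  haveI : IsFiniteMeasure (volume.restrict (Set.Ioc a b)) :=
    ⟨by rw [Measure.restrict_apply_univ]; exact measure_Ioc_lt_top⟩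
  have hkint : Integrable (Function.uncurry fun x t => k (x, t))
      ((volume.restrict (Set.Ioc a b)).prod (volume.restrict (Set.Ioc a b))) := by
    have hmem : ∀ᵐ p : ℝ × ℝ ∂((volume.restrict (Set.Ioc a b)).prod
        (volume.restrict (Set.Ioc a b))), p ∈ (Set.Ioc a b) ×ˢ (Set.Ioc a b) := by
      rw [Measure.prod_restrict]
      exact ae_restrict_mem (measurableSet_Ioc.prod measurableSet_Ioc)
    refine ⟨hkm.aestronglyMeasurable, HasFiniteIntegral.of_bounded (C := Cψ * C) ?_⟩
    filter_upwards [hmem] with p hp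
    rcases hp with ⟨hp1, hp2⟩
    by_cases hle : p.2 ≤ p.1
    · simp only [k, hle, if_pos, Function.uncurry]
      rw [Real.norm_eq_abs, abs_mul]
      exact mul_le_mul (hCψ _ ⟨hp2.1.le, hp2.2⟩) (hhb _) (abs_nonneg _) hCψ0
    · simp only [k, hle, if_neg, Function.uncurry, not_false_iff]
      simpa using mul_nonneg hCψ0 hC0
  -- inner computation 1
  have inner1 : ∀ x ∈ Set.Ioc a b,
      (∫ t in Set.Ioc a b, k (x, t)) = P x * h x := by
    intro x hx
    have : (fun t => k (x, t)) = (Set.Iic x).indicator (fun t => ψ t * h x) := by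
      funext t
      simp only [k, Set.indicator_apply, Set.mem_Iic]
    rw [this, setIntegral_indicator measurableSet_Iic, Set.Ioc_inter_Iic,
      min_eq_right hx.2, integral_mul_const]
    show (∫ t in Set.Ioc a x, ψ t) * h x = (∫ t in a..x, ψ t) * h x
    rw [intervalIntegral.integral_of_le hx.1.le]
  -- inner computation 2
  have inner2 : ∀ t ∈ Set.Ioc a b,
      (∫ x in Set.Ioc a b, k (x, t)) = ψ t * (Hh b - Hh t) := by
    intro t ht
    have h1 : (fun x => k (x, t)) = (Set.Ici t).indicator (fun x => ψ t * h x) := by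
      funext x
      simp only [k, Set.indicator_apply, Set.mem_Ici]
    have h2 : Set.Ioc a b ∩ Set.Ici t = Set.Icc t b := by
      ext x
      simp only [Set.mem_inter_iff, Set.mem_Ioc, Set.mem_Ici, Set.mem_Icc]
      constructor
      · rintro ⟨⟨_, h2⟩, h3⟩; exact ⟨h3, h2⟩
      · rintro ⟨h1', h2⟩; exact ⟨⟨lt_of_lt_of_le ht.1 h1', h2⟩, h1'⟩
    rw [h1, setIntegral_indicator measurableSet_Ici, h2, integral_Icc_eq_integral_Ioc,
      ← intervalIntegral.integral_of_le ht.2, intervalIntegral.integral_const_mul]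
    congr 1
    show (∫ x in t..b, h x) = (∫ t in a..b, h t) - ∫ t' in a..t, h t'
    exact (intervalIntegral.integral_interval_sub_left (hInt a b) (hInt a t)).symm
  -- integrability of pieces on Ioc a b
  have iP : IntegrableOn (fun x => P x * h x) (Set.Ioc a b) volume := by
    obtain ⟨CP, hCP⟩ : ∃ CP, ∀ x ∈ Set.Icc a b, ‖P x‖ ≤ CP :=
      isCompact_Icc.exists_bound_of_continuousOn hPc.continuousOn
    refine Measure.integrableOn_of_bounded (M := CP * C) measure_Ioc_lt_top.ne
      ((hPc.measurable.mul hhm).aestronglyMeasurable) ?_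
    filter_upwards [ae_restrict_mem measurableSet_Ioc] with x hx
    rw [Real.norm_eq_abs, abs_mul]
    exact mul_le_mul (hCP x ⟨hx.1.le, hx.2⟩) (hhb x) (abs_nonneg _)
      (le_trans (norm_nonneg _) (hCP a ⟨le_rfl, hab⟩))
  have ih : IntegrableOn h (Set.Ioc a b) volume := (hInt a b).1
  have iψ : IntegrableOn ψ (Set.Ioc a b) volume :=
    (hψ.intervalIntegrable a b).1
  have iψH : IntegrableOn (fun t => ψ t * Hh t) (Set.Ioc a b) volume :=
    ((hψ.mul hHc).intervalIntegrable a b).1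
  -- main computation
  have key : ∫ x in Set.Ioc a b, P x * h x
      = P b * Hh b - ∫ t in Set.Ioc a b, ψ t * Hh t := by
    have swap := MeasureTheory.integral_integral_swap hkint
    calc ∫ x in Set.Ioc a b, P x * h x
        = ∫ x in Set.Ioc a b, ∫ t in Set.Ioc a b, k (x, t) :=
          (setIntegral_congr_fun measurableSet_Ioc fun x hx => (inner1 x hx).symm)
      _ = ∫ t in Set.Ioc a b, ∫ x in Set.Ioc a b, k (x, t) := swap
      _ = ∫ t in Set.Ioc a b, ψ t * (Hh b - Hh t) :=
          setIntegral_congr_fun measurableSet_Ioc inner2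
      _ = ∫ t in Set.Ioc a b, (ψ t * Hh b - ψ t * Hh t) := by
          congr 1; funext t; ring
      _ = (∫ t in Set.Ioc a b, ψ t * Hh b) - ∫ t in Set.Ioc a b, ψ t * Hh t :=
          integral_sub (iψ.mul_const _) iψH
      _ = P b * Hh b - ∫ t in Set.Ioc a b, ψ t * Hh t := by
          rw [integral_mul_const, ← intervalIntegral.integral_of_le hab]
  -- assemble
  have expand : ∫ x in Set.Ioc a b, φ x * h x
      = ∫ x in Set.Ioc a b, (φ a * h x + P x * h x) := by
    refine setIntegral_congr_fun measurableSet_Ioc fun x _ => ?_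
    rw [hrep x]; ring
  rw [intervalIntegral.integral_of_le hab, expand,
    integral_add (ih.const_mul _) iP, integral_const_mul, key]
  rw [intervalIntegral.integral_of_le hab, intervalIntegral.integral_of_le hab]
  have : φ b = φ a + P b := hrep b
  rw [← intervalIntegral.integral_of_le hab, this]
  ring

private lemma periodic_bound {F : ℝ → ℝ} {C : ℝ} (hF : Function.Periodic F 1)
    (hb : ∀ x ∈ Set.Icc (0:ℝ) 1, |F x| ≤ C) : ∀ x, |F x| ≤ C := by
  intro x
  have h1 : F (x - (⌊x⌋ : ℝ) * 1) = F x := hF.sub_int_mul_eq ⌊x⌋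
  rw [mul_one] at h1
  rw [← h1]
  exact hb _ ⟨by linarith [Int.floor_le x], by linarith [Int.lt_floor_add_one x]⟩

private lemma G_periodic {g : ℝ → ℝ} {B : ℝ} (hgb : ∀ x, |g x| ≤ B) (hgm : Measurable g)
    (hper : ∀ x, g (x + 1) = g x) (hmean : ∫ y in (0:ℝ)..1, g y = 0) :
    Function.Periodic (fun x => ∫ t in (0:ℝ)..x, g t) 1 := by
  intro x
  have hInt := bdd_intInt hgm hgb
  have h1 : ∫ t in (0:ℝ)..(x+1), g t = (∫ t in (0:ℝ)..x, g t) + ∫ t in x..(x+1), g t :=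
    (intervalIntegral.integral_add_adjacent_intervals (hInt 0 x) (hInt x (x+1))).symm
  have hp : Function.Periodic g 1 := hper
  simp only [h1, hp.intervalIntegral_add_eq x 0, zero_add, hmean, add_zero]

private lemma parts_g {g φ G : ℝ → ℝ} {B : ℝ} (hgb : ∀ x, |g x| ≤ B) (hgm : Measurable g)
    (hGdef : ∀ x, G x = ∫ t in (0:ℝ)..x, g t)
    (hφ : ContDiff ℝ 1 φ) {a b l : ℝ} (hab : a ≤ b) (hl : 0 < l) :
    ∫ x in a..b, φ x * ((1/l) * g (x/l))
      = φ b * (G (b/l) - G (a/l))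
        - ∫ x in a..b, deriv φ x * (G (x/l) - G (a/l)) := by
  have hB0 : 0 ≤ B := le_trans (abs_nonneg _) (hgb 0)
  have hInt := bdd_intInt hgm hgb
  have hψc : Continuous (deriv φ) := hφ.continuous_deriv le_rfl
  have hhm : Measurable (fun x => (1/l) * g (x/l)) :=
    (hgm.comp (measurable_id.div_const l)).const_mul _
  have hhb : ∀ x, |(1/l) * g (x/l)| ≤ (1/l) * B := by
    intro x
    rw [abs_mul, abs_of_pos (by positivity : (0:ℝ) < 1/l)]
    exact mul_le_mul_of_nonneg_left (hgb _) (by positivity)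
  have hrep : ∀ x, φ x = φ a + ∫ t in a..x, deriv φ t := by
    intro x
    have := intervalIntegral.integral_deriv_eq_sub
      (fun y _ => (hφ.differentiable one_ne_zero).differentiableAt)
      (hψc.intervalIntegrable a x)
    linarith [this]
  have hsub : ∀ x : ℝ, (∫ t in a..x, (1/l) * g (t/l)) = G (x/l) - G (a/l) := by
    intro x
    rw [intervalIntegral.integral_const_mul, intervalIntegral.integral_comp_div g hl.ne',
      smul_eq_mul, one_div, inv_mul_cancel_left₀ hl.ne', hGdef, hGdef]
    exact (intervalIntegral.integral_interval_sub_left (hInt 0 (x/l)) (hInt 0 (a/l))).symm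
  have := parts_aux hab hhm hhb hψc hrep
  rw [this]
  have h1 : (∫ x in a..b, (1/l) * g (x/l)) = G (b/l) - G (a/l) := hsub b
  rw [h1]
  congr 1
  refine intervalIntegral.integral_congr fun x _ => ?_
  rw [hsub x]

private lemma weak_conv {G ψ : ℝ → ℝ} {B L : ℝ} (hL : 0 < L) (hB0 : 0 ≤ B)
    (hGc : Continuous G) (hGb : ∀ x, |G x| ≤ B) (hGper : Function.Periodic G 1)
    (hψ : Continuous ψ)
    {lseq : ℕ → ℝ} (hpos : ∀ n, 0 < lseq n) (hto : Tendsto lseq atTop (𝓝 0)) :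
    Tendsto (fun n => ∫ x in (0:ℝ)..L, ψ x * G (x / lseq n)) atTop
      (𝓝 ((∫ y in (0:ℝ)..1, G y) * ∫ x in (0:ℝ)..L, ψ x)) := by
  set Gbar : ℝ := ∫ y in (0:ℝ)..1, G y with hGbar
  have hGbarb : |Gbar| ≤ B := by
    have h := intervalIntegral.norm_integral_le_of_norm_le_const
      (a := (0:ℝ)) (b := 1) (C := B) (f := G) (fun t _ => hGb t)
    rw [Real.norm_eq_abs] at h
    calc |Gbar| ≤ B * |1 - (0:ℝ)| := h
      _ = B := by norm_num
  -- primitive of G - Gbar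
  set H : ℝ → ℝ := fun x => ∫ t in (0:ℝ)..x, (G t - Gbar) with hH
  have hGmc : Continuous (fun t => G t - Gbar) := hGc.sub continuous_const
  have hHd : ∀ x : ℝ, HasDerivAt H (G x - Gbar) x := fun x =>
    (hGmc.integral_hasStrictDerivAt 0 x).hasDerivAt
  have hHc : Continuous H :=
    intervalIntegral.continuous_primitive (fun u v => hGmc.intervalIntegrable u v) 0
  have hH0 : H 0 = 0 := intervalIntegral.integral_same
  have hHper : Function.Periodic H 1 := by
    intro x
    have hGmper : Function.Periodic (fun t => G t - Gbar) 1 := fun t => by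
      simp only [hGper t]
    have h1 : ∫ t in (0:ℝ)..(x+1), (G t - Gbar)
        = (∫ t in (0:ℝ)..x, (G t - Gbar)) + ∫ t in x..(x+1), (G t - Gbar) :=
      (intervalIntegral.integral_add_adjacent_intervals
        (hGmc.intervalIntegrable 0 x) (hGmc.intervalIntegrable x (x+1))).symm
    have h2 : (∫ t in x..(x+1), (G t - Gbar)) = ∫ t in (0:ℝ)..(0+1:ℝ), (G t - Gbar) :=
      hGmper.intervalIntegral_add_eq x 0
    have h3 : (∫ t in (0:ℝ)..1, (G t - Gbar)) = 0 := by
      rw [intervalIntegral.integral_sub (hGc.intervalIntegrable 0 1)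
        (intervalIntegrable_const)]
      simp [hGbar]
    simp only [hH, h1, h2, zero_add, h3, add_zero]
  obtain ⟨HB, hHB⟩ : ∃ HB, ∀ x ∈ Set.Icc (0:ℝ) 1, ‖H x‖ ≤ HB :=
    isCompact_Icc.exists_bound_of_continuousOn hHc.continuousOn
  have hHBall : ∀ x, |H x| ≤ HB := periodic_bound hHper hHB
  have hHB0 : 0 ≤ HB := le_trans (abs_nonneg _) (hHBall 0)
  -- now the epsilon argument
  rw [Metric.tendsto_atTop]
  intro ε hε
  set δ : ℝ := ε / (4 * (B+1) * (L+1)) with hδdef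
  have hδ : 0 < δ := by positivity
  obtain ⟨p, hp⟩ := exists_polynomial_near_of_continuousOn 0 L ψ hψ.continuousOn δ hδ
  set q : ℝ → ℝ := fun x => Polynomial.eval x p with hq
  set q' : ℝ → ℝ := fun x => Polynomial.eval x (Polynomial.derivative p) with hq'
  have hqc : Continuous q := p.continuous
  have hq'c : Continuous q' := (Polynomial.derivative p).continuous
  obtain ⟨Cq, hCq⟩ : ∃ Cq, ∀ x ∈ Set.Icc (0:ℝ) L, ‖q' x‖ ≤ Cq :=
    isCompact_Icc.exists_bound_of_continuousOn hq'c.continuousOn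
  have hCq0 : 0 ≤ Cq := le_trans (norm_nonneg _) (hCq 0 ⟨le_rfl, hL.le⟩)
  set K : ℝ := |q L| * HB + Cq * HB * L + 1 with hK
  have hK0 : 0 < K := by positivity
  obtain ⟨N, hN⟩ := (Metric.tendsto_atTop.1 hto) (ε / (2*K)) (by positivity)
  refine ⟨N, fun n hn => ?_⟩
  set l : ℝ := lseq n with hl
  have hl0 : 0 < l := hpos n
  have hlsmall : l * K < ε / 2 := by
    have := hN n hn
    rw [Real.dist_eq, sub_zero, abs_of_pos hl0] at this
    calc l * K < (ε / (2*K)) * K := by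
          exact mul_lt_mul_of_pos_right this hK0
      _ = ε / 2 := by field_simp
  -- decomposition
  have hGl : Continuous (fun x => G (x / l)) := hGc.comp (continuous_id.div_const l)
  have i1 : IntervalIntegrable (fun x => ψ x * G (x/l)) volume 0 L :=
    (hψ.mul hGl).intervalIntegrable 0 L
  have i2 : IntervalIntegrable (fun x => q x * G (x/l)) volume 0 L :=
    (hqc.mul hGl).intervalIntegrable 0 L
  have iψ : IntervalIntegrable ψ volume 0 L := hψ.intervalIntegrable 0 L
  have iq : IntervalIntegrable q volume 0 L := hqc.intervalIntegrable 0 L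
  set I1 : ℝ := ∫ x in (0:ℝ)..L, (ψ x - q x) * G (x/l) with hI1
  set I2 : ℝ := ∫ x in (0:ℝ)..L, q x * (G (x/l) - Gbar) with hI2
  set I3 : ℝ := Gbar * ((∫ x in (0:ℝ)..L, q x) - ∫ x in (0:ℝ)..L, ψ x) with hI3
  have decomp : (∫ x in (0:ℝ)..L, ψ x * G (x / l)) - Gbar * (∫ x in (0:ℝ)..L, ψ x)
      = I1 + I2 + I3 := by
    have e1 : I1 = (∫ x in (0:ℝ)..L, ψ x * G (x/l)) - ∫ x in (0:ℝ)..L, q x * G (x/l) := by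
      rw [hI1, ← intervalIntegral.integral_sub i1 i2]
      refine intervalIntegral.integral_congr fun x _ => ?_
      ring
    have e2 : I2 = (∫ x in (0:ℝ)..L, q x * G (x/l)) - (∫ x in (0:ℝ)..L, q x) * Gbar := by
      rw [hI2, ← intervalIntegral.integral_mul_const,
        ← intervalIntegral.integral_sub i2 (iq.mul_const _)]
      refine intervalIntegral.integral_congr fun x _ => ?_
      ring
    rw [e1, e2, hI3]
    ring
  -- bounds
  have bI1 : |I1| ≤ δ * B * L := by
    have : |I1| ≤ δ * B * |L - 0| := by
      rw [hI1, ← Real.norm_eq_abs]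
      refine intervalIntegral.norm_integral_le_of_norm_le_const fun x hx => ?_
      have hx' : x ∈ Set.Icc (0:ℝ) L := by
        rcases hx with ⟨h1, h2⟩
        simp only [min_eq_left hL.le, max_eq_right hL.le] at h1 h2 ⊢
        exact ⟨h1.le, h2⟩
      rw [Real.norm_eq_abs, abs_mul]
      have := hp x hx'
      have h1 : |ψ x - q x| ≤ δ := by
        rw [abs_sub_comm]
        exact this.le
      exact mul_le_mul h1 (hGb _) (abs_nonneg _) hδ.le
    simpa [abs_of_pos hL] using this
  have bI3 : |I3| ≤ B * (δ * L) := by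
    rw [hI3, abs_mul]
    have : |(∫ x in (0:ℝ)..L, q x) - ∫ x in (0:ℝ)..L, ψ x| ≤ δ * L := by
      rw [← intervalIntegral.integral_sub iq iψ]
      have : |∫ x in (0:ℝ)..L, (q x - ψ x)| ≤ δ * |L - 0| := by
        rw [← Real.norm_eq_abs]
        refine intervalIntegral.norm_integral_le_of_norm_le_const fun x hx => ?_
        have hx' : x ∈ Set.Icc (0:ℝ) L := by
          rcases hx with ⟨h1, h2⟩
          simp only [min_eq_left hL.le, max_eq_right hL.le] at h1 h2 ⊢
          exact ⟨h1.le, h2⟩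
        rw [Real.norm_eq_abs]
        exact (hp x hx').le
      simpa [abs_of_pos hL] using this
    exact mul_le_mul hGbarb this (abs_nonneg _) hB0
  -- integration by parts for I2
  have bI2 : |I2| ≤ l * K := by
    have hv : ∀ x ∈ Set.uIcc (0:ℝ) L,
        HasDerivAt (fun x => l * H (x/l)) (G (x/l) - Gbar) x := by
      intro x _
      have h1 : HasDerivAt (fun x : ℝ => x / l) (1/l) x := by
        simpa using (hasDerivAt_id x).div_const l
      have h2 : HasDerivAt (fun x => H (x/l)) ((G (x/l) - Gbar) * (1/l)) x :=
        by have h2' := (hHd (x/l)).comp x h1; exact h2'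
      have h3 := h2.const_mul l
      have e : l * ((G (x/l) - Gbar) * (1/l)) = G (x/l) - Gbar := by
        rw [mul_comm (G (x/l) - Gbar), ← mul_assoc, mul_one_div_cancel hl0.ne', one_mul]
      rwa [e] at h3
    have hu : ∀ x ∈ Set.uIcc (0:ℝ) L, HasDerivAt q (q' x) x := fun x _ =>
      Polynomial.hasDerivAt p x
    have parts := intervalIntegral.integral_mul_deriv_eq_deriv_mul hu hv
      (hq'c.intervalIntegrable 0 L) ((hGl.sub continuous_const).intervalIntegrable 0 L)
    rw [hI2]
    have h0 : (0:ℝ)/l = 0 := zero_div l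
    rw [parts, h0, hH0, mul_zero, mul_zero, sub_zero]
    have b1 : |q L * (l * H (L/l))| ≤ |q L| * (l * HB) := by
      rw [abs_mul, abs_mul, abs_of_pos hl0]
      exact mul_le_mul_of_nonneg_left
        (mul_le_mul_of_nonneg_left (hHBall _) hl0.le) (abs_nonneg _)
    have b2 : |∫ x in (0:ℝ)..L, q' x * (l * H (x/l))| ≤ Cq * (l * HB) * L := by
      have : |∫ x in (0:ℝ)..L, q' x * (l * H (x/l))| ≤ Cq * (l * HB) * |L - 0| := by
        rw [← Real.norm_eq_abs]
        refine intervalIntegral.norm_integral_le_of_norm_le_const fun x hx => ?_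
        have hx' : x ∈ Set.Icc (0:ℝ) L := by
          rcases hx with ⟨h1, h2⟩
          simp only [min_eq_left hL.le, max_eq_right hL.le] at h1 h2 ⊢
          exact ⟨h1.le, h2⟩
        rw [Real.norm_eq_abs, abs_mul, abs_mul, abs_of_pos hl0]
        exact mul_le_mul (hCq x hx')
          (mul_le_mul_of_nonneg_left (hHBall _) hl0.le)
          (by positivity) hCq0
      simpa [abs_of_pos hL] using this
    calc |q L * (l * H (L/l)) - ∫ x in (0:ℝ)..L, q' x * (l * H (x/l))|
        ≤ |q L * (l * H (L/l))| + |∫ x in (0:ℝ)..L, q' x * (l * H (x/l))| :=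
          abs_sub _ _
      _ ≤ |q L| * (l * HB) + Cq * (l * HB) * L := add_le_add b1 b2
      _ ≤ l * K := by rw [hK]; nlinarith
  -- conclude
  rw [Real.dist_eq]
  have : |(∫ x in (0:ℝ)..L, ψ x * G (x / l)) - Gbar * ∫ x in (0:ℝ)..L, ψ x|
      ≤ |I1| + |I2| + |I3| := by
    rw [decomp]
    exact (abs_add_le _ _).trans (add_le_add_left (abs_add_le _ _) _)
  have hsum : |I1| + |I3| ≤ ε / 2 := by
    have h1 : δ * B * L + B * (δ * L) = 2 * δ * B * L := by ring
    have h2 : 2 * δ * B * L ≤ ε / 2 := by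
      have hBL : B * L ≤ (B+1) * (L+1) := by nlinarith
      have heq : 2 * δ * B * L = ε / 2 * (B * L) / ((B+1)*(L+1)) := by
        rw [hδdef]
        have h4 : ((B+1)*(L+1)) ≠ 0 := by positivity
        field_simp
        ring
      rw [heq, div_le_iff₀ (by positivity : (0:ℝ) < (B+1)*(L+1))]
      exact mul_le_mul_of_nonneg_left hBL (by positivity)
    calc |I1| + |I3| ≤ δ * B * L + B * (δ * L) := add_le_add bI1 bI3
      _ ≤ ε / 2 := by linarith
  calc |(∫ x in (0:ℝ)..L, ψ x * G (x / l)) - Gbar * ∫ x in (0:ℝ)..L, ψ x|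
      ≤ |I1| + |I2| + |I3| := this
    _ ≤ (|I1| + |I3|) + l * K := by have := bI2; linarith
    _ < ε / 2 + ε / 2 := by linarith
    _ = ε := by ring

/-- one-dimensional polarization theorem with a boundary partial
cell: the partial cell contributes `φ(L) σ_l + o(1)` with `σ_l` bounded, and along
any subsequence with `σ_l → σ` the full integral converges to
`p₀ ∫₀^L φ' + φ(L) σ`. -/
theorem stmt_10 (g φ : ℝ → ℝ) (L : ℝ) (hL : 0 < L) (B : ℝ)
    (hgb : ∀ x, |g x| ≤ B) (hgm : Measurable g)
    (hper : ∀ x, g (x + 1) = g x) (hmean : ∫ y in (0:ℝ)..1, g y = 0)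
    (hφ : ContDiff ℝ 1 φ) :
    (∃ M : ℝ, ∀ l : ℝ, 0 < l →
      |∫ y in (0:ℝ)..((L - (⌊L / l⌋ : ℝ) * l) / l), g y| ≤ M) ∧
    (∃ e : ℝ → ℝ, Tendsto e (𝓝[>] 0) (𝓝 0) ∧ ∀ l : ℝ, 0 < l →
      (∫ x in ((⌊L / l⌋ : ℝ) * l)..L, φ x * ((1 / l) * g (x / l)))
        = φ L * (∫ y in (0:ℝ)..((L - (⌊L / l⌋ : ℝ) * l) / l), g y) + e l) ∧
    ∀ (lseq : ℕ → ℝ) (σ : ℝ), (∀ n, 0 < lseq n) → Tendsto lseq atTop (𝓝 0) →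
      Tendsto (fun n => ∫ y in (0:ℝ)..((L - (⌊L / lseq n⌋ : ℝ) * lseq n) / lseq n), g y)
        atTop (𝓝 σ) →
      Tendsto (fun n => ∫ x in (0:ℝ)..L, φ x * ((1 / lseq n) * g (x / lseq n))) atTop
        (𝓝 ((∫ y in (0:ℝ)..1, y * g y) * (∫ x in (0:ℝ)..L, deriv φ x) + φ L * σ)) := by
  have hB0 : 0 ≤ B := le_trans (abs_nonneg _) (hgb 0)
  have hInt := bdd_intInt hgm hgb
  set G : ℝ → ℝ := fun x => ∫ t in (0:ℝ)..x, g t with hGdefn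
  have hGdef : ∀ x, G x = ∫ t in (0:ℝ)..x, g t := fun x => rfl
  have hGper : Function.Periodic G 1 := G_periodic hgb hgm hper hmean
  have hGc : Continuous G := intervalIntegral.continuous_primitive hInt 0
  have hG0 : G 0 = 0 := intervalIntegral.integral_same
  have hGb : ∀ x, |G x| ≤ B := by
    refine periodic_bound hGper fun x hx => ?_
    have h := intervalIntegral.norm_integral_le_of_norm_le_const
      (a := (0:ℝ)) (b := x) (C := B) (f := g) (fun t _ => hgb t)
    rw [Real.norm_eq_abs] at h
    calc |G x| ≤ B * |x - 0| := h
      _ ≤ B * 1 := by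
          refine mul_le_mul_of_nonneg_left ?_ hB0
          rw [sub_zero, abs_of_nonneg hx.1]; exact hx.2
      _ = B := mul_one B
  have hGint : ∀ n : ℤ, G (n : ℝ) = 0 := by
    intro n
    have h := hGper.int_mul_eq n
    rw [mul_one] at h
    rw [h, hG0]
  have hσeq : ∀ l : ℝ, 0 < l →
      (∫ y in (0:ℝ)..((L - (⌊L / l⌋ : ℝ) * l) / l), g y) = G (L / l) := by
    intro l hl
    have h1 : (L - (⌊L / l⌋ : ℝ) * l) / l = L / l - (⌊L / l⌋ : ℝ) := by
      field_simp
    rw [← hGdef ((L - (⌊L / l⌋ : ℝ) * l) / l), h1]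
    have h2 := hGper.sub_int_mul_eq (x := L / l) ⌊L / l⌋
    rwa [mul_one] at h2
  have hfloor : ∀ l : ℝ, 0 < l → 0 ≤ (⌊L / l⌋ : ℝ) ∧ (⌊L / l⌋ : ℝ) * l ≤ L
      ∧ L < ((⌊L / l⌋ : ℝ) + 1) * l := by
    intro l hl
    have h1 : (⌊L / l⌋ : ℝ) ≤ L / l := Int.floor_le _
    have h2 : L / l < ⌊L / l⌋ + 1 := Int.lt_floor_add_one _
    refine ⟨?_, (le_div_iff₀ hl).mp h1, by push_cast at h2 ⊢; exact (div_lt_iff₀ hl).mp h2⟩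
    exact_mod_cast Int.floor_nonneg.mpr (le_of_lt (div_pos hL hl))
  have hψc : Continuous (deriv φ) := hφ.continuous_deriv le_rfl
  obtain ⟨Cφ, hCφ⟩ : ∃ C, ∀ x ∈ Set.Icc (0:ℝ) L, ‖deriv φ x‖ ≤ C :=
    isCompact_Icc.exists_bound_of_continuousOn hψc.continuousOn
  have hCφ0 : 0 ≤ Cφ := le_trans (norm_nonneg _) (hCφ 0 ⟨le_rfl, hL.le⟩)
  refine ⟨⟨B, fun l hl => by rw [hσeq l hl]; exact hGb _⟩,
    ⟨fun l => (∫ x in ((⌊L / l⌋ : ℝ) * l)..L, φ x * ((1 / l) * g (x / l)))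
      - φ L * (∫ y in (0:ℝ)..((L - (⌊L / l⌋ : ℝ) * l) / l), g y), ?_,
      fun l hl => by ring⟩, ?_⟩
  · -- the error term tends to zero
    refine squeeze_zero_norm' (a := fun l : ℝ => Cφ * B * l) ?_ ?_
    · filter_upwards [self_mem_nhdsWithin] with l hl
      replace hl : 0 < l := hl
      obtain ⟨hN0, hNle, hNlt⟩ := hfloor l hl
      have key := parts_g hgb hgm hGdef hφ hNle hl
      have hal : ((⌊L / l⌋ : ℝ) * l) / l = (⌊L / l⌋ : ℝ) :=
        mul_div_cancel_right₀ _ hl.ne'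
      rw [hal, hGint ⌊L / l⌋] at key
      rw [Real.norm_eq_abs, hσeq l hl, key]
      have heq : φ L * (G (L / l) - 0)
          - (∫ x in ((⌊L / l⌋ : ℝ) * l)..L, deriv φ x * (G (x / l) - 0))
          - φ L * G (L / l)
          = -(∫ x in ((⌊L / l⌋ : ℝ) * l)..L, deriv φ x * (G (x / l) - 0)) := by ring
      rw [heq, abs_neg]
      have hb2 := intervalIntegral.norm_integral_le_of_norm_le_const
        (a := (⌊L / l⌋ : ℝ) * l) (b := L) (C := Cφ * B)
        (f := fun x => deriv φ x * (G (x / l) - 0)) ?_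
      · rw [Real.norm_eq_abs] at hb2
        calc |∫ x in ((⌊L / l⌋ : ℝ) * l)..L, deriv φ x * (G (x / l) - 0)|
            ≤ Cφ * B * |L - (⌊L / l⌋ : ℝ) * l| := hb2
          _ ≤ Cφ * B * l := by
              refine mul_le_mul_of_nonneg_left ?_ (by positivity)
              rw [abs_of_nonneg (by linarith)]
              nlinarith
      · intro x hx
        rw [Set.uIoc_of_le hNle] at hx
        have hx' : x ∈ Set.Icc (0:ℝ) L :=
          ⟨le_trans (mul_nonneg hN0 hl.le) hx.1.le, hx.2⟩
        simp only [Real.norm_eq_abs, sub_zero, abs_mul]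
        exact mul_le_mul (hCφ x hx') (hGb _) (abs_nonneg _) hCφ0
    · have h : Tendsto (fun l : ℝ => Cφ * B * l) (𝓝 0) (𝓝 (Cφ * B * 0)) :=
        (continuous_const.mul continuous_id).tendsto (0:ℝ)
      rw [mul_zero] at h
      exact h.mono_left nhdsWithin_le_nhds
  · -- part 3
    intro lseq σ hpos hto hσl
    have hyg : (∫ y in (0:ℝ)..1, y * g y) = - ∫ y in (0:ℝ)..1, G y := by
      have hrep : ∀ x : ℝ, (fun x : ℝ => x) x
          = (fun x : ℝ => x) 0 + ∫ t in (0:ℝ)..x, (fun _ : ℝ => (1:ℝ)) t := by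
        intro x; simp
      have h := parts_aux (le_of_lt one_pos) hgm hgb continuous_const hrep
      simp only [one_mul] at h
      rw [hmean, zero_sub] at h
      rw [h]
    have hseq : ∀ n, (∫ x in (0:ℝ)..L, φ x * ((1 / lseq n) * g (x / lseq n)))
        = φ L * G (L / lseq n) - ∫ x in (0:ℝ)..L, deriv φ x * G (x / lseq n) := by
      intro n
      have key := parts_g hgb hgm hGdef hφ hL.le (hpos n)
      rw [zero_div, hG0] at key
      rw [key]
      simp only [sub_zero]
    have hσG : Tendsto (fun n => G (L / lseq n)) atTop (𝓝 σ) :=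
      hσl.congr fun n => hσeq (lseq n) (hpos n)
    have hwk := weak_conv hL hB0 hGc hGb hGper hψc hpos hto
    have hcomb : Tendsto (fun n => φ L * G (L / lseq n)
        - ∫ x in (0:ℝ)..L, deriv φ x * G (x / lseq n)) atTop
        (𝓝 (φ L * σ - (∫ y in (0:ℝ)..1, G y) * ∫ x in (0:ℝ)..L, deriv φ x)) :=
      (hσG.const_mul (φ L)).sub hwk
    have hT : ((∫ y in (0:ℝ)..1, y * g y) * (∫ x in (0:ℝ)..L, deriv φ x) + φ L * σ)
        = φ L * σ - (∫ y in (0:ℝ)..1, G y) * ∫ x in (0:ℝ)..L, deriv φ x := by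
      rw [hyg]; ring
    rw [hT]
    exact Tendsto.congr (fun n => (hseq n).symm) hcomb
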